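/- arXiv:1510.07357 — 6 statements merged into one kernel-verified Lean document; each statement's English description precedes it below -/
import Mathlib

section
/- For all positive integers x ≤ N, there exists an (N,x)-strongly-selective family of length O(x² log N); i.e., there is a family S of subsets of {1,…,N} of size at most c·x²·⌈log N⌉ (for an absolute constant c) such that for every nonempty Z ⊆ {1,…,N} with |Z| ≤ x and every z ∈ Z, some member S_i of the family satisfies S_i ∩ Z = {z}. -/
open Finset

private lemma ssf_geom (N x : ℕ) :
    ∑ k ∈ Finset.range (x+1), N^k ≤ (N+1)^x := by
  induction x with
  | zero => simp
  | succ x ih =>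
    rw [Finset.sum_range_succ, pow_succ]
    have h1 : N^x * N ≤ (N+1)^x * N :=
      Nat.mul_le_mul_right N (Nat.pow_le_pow_left (Nat.le_succ N) x)
    have h2 : (N+1)^(x+1) = (N+1)^x + (N+1)^x * N := by ring
    omega

private lemma ssf_pow3 (x m : ℕ) (hx : 1 ≤ x) (hm : m ≤ x - 1) :
    x ^ m ≤ 3 * (x-1) ^ m := by
  rcases Nat.eq_or_lt_of_le hx with h1 | h2
  · have : m = 0 := by omega
    subst this; simp
  · have hx2 : 2 ≤ x := h2
    have hy : (1:ℝ) ≤ (x:ℝ) - 1 := by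
      have : (2:ℝ) ≤ (x:ℝ) := by exact_mod_cast hx2
      linarith
    have hy0 : (0:ℝ) < (x:ℝ) - 1 := by linarith
    set y : ℝ := (x:ℝ) - 1 with hyd
    have key : ((x:ℝ))^m ≤ 3 * y^m := by
      have hxy : (x:ℝ) = y * (1 + 1/y) := by
        field_simp
        rw [hyd]; ring
      rw [hxy, mul_pow]
      have h3 : (1 + 1/y)^m ≤ Real.exp 1 := by
        have e1 : (1 + 1/y) ≤ Real.exp (1/y) := by
          have := Real.add_one_le_exp (1/y)
          linarith
        have e2 : (1 + 1/y)^m ≤ Real.exp (1/y) ^ m :=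
          pow_le_pow_left₀ (by positivity) e1 m
        have e3 : Real.exp (1/y) ^ m = Real.exp ((m:ℝ) / y) := by
          rw [← Real.exp_nat_mul]
          ring_nf
        have e4 : (m:ℝ) / y ≤ 1 := by
          rw [div_le_one hy0]
          have h5 : (m:ℝ) ≤ ((x-1:ℕ):ℝ) := by exact_mod_cast hm
          have h6 : ((x - 1 : ℕ) : ℝ) = (x:ℝ) - 1 := by
            push_cast [Nat.cast_sub hx]; ring
          rw [h6] at h5
          linarith
        calc (1 + 1/y)^m ≤ Real.exp (1/y) ^ m := e2
          _ = Real.exp ((m:ℝ)/y) := e3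
          _ ≤ Real.exp 1 := Real.exp_le_exp.mpr e4
      have hexp3 : Real.exp 1 ≤ 3 := by
        have := Real.exp_one_lt_d9
        linarith
      have hym : (0:ℝ) ≤ y^m := by positivity
      calc y^m * (1+1/y)^m ≤ y^m * 3 :=
            mul_le_mul_of_nonneg_left (h3.trans hexp3) hym
        _ = 3 * y^m := by ring
    have hcast : ((x-1:ℕ):ℝ) = y := by
      rw [hyd]; push_cast [Nat.cast_sub hx]; ring
    have : ((x:ℝ))^m ≤ ((3 * (x-1)^m : ℕ) : ℝ) := by
      push_cast
      rw [hcast]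
      exact key
    exact_mod_cast this

private lemma ssf_half (x : ℕ) (hx : 1 ≤ x) :
    (1 - 1/(3*(x:ℝ)))^(3*x) ≤ 1/2 := by
  have hx0 : (0:ℝ) < (x:ℝ) := by exact_mod_cast hx
  have hx1 : (1:ℝ) ≤ (x:ℝ) := by exact_mod_cast hx
  have h0 : (0:ℝ) ≤ 1 - 1/(3*(x:ℝ)) := by
    have : 1/(3*(x:ℝ)) ≤ 1/3 :=
      one_div_le_one_div_of_le (by norm_num) (by linarith)
    linarith
  have e1 : 1 - 1/(3*(x:ℝ)) ≤ Real.exp (-(1/(3*(x:ℝ)))) := by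
    have := Real.add_one_le_exp (-(1/(3*(x:ℝ))))
    linarith
  have e2 : (1 - 1/(3*(x:ℝ)))^(3*x) ≤ Real.exp (-(1/(3*(x:ℝ))))^(3*x) :=
    pow_le_pow_left₀ h0 e1 _
  have e3 : Real.exp (-(1/(3*(x:ℝ))))^(3*x) = Real.exp (-1) := by
    rw [← Real.exp_nat_mul]
    congr 1
    push_cast
    field_simp
  have e5 : Real.exp (-1) ≤ 1/2 := by
    rw [Real.exp_neg]
    have h2 : (2:ℝ) ≤ Real.exp 1 := by have := Real.exp_one_gt_d9; linarith
    calc (Real.exp 1)⁻¹ ≤ (2:ℝ)⁻¹ := inv_anti₀ (by norm_num) h2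
      _ = 1/2 := by norm_num
  calc (1 - 1/(3*(x:ℝ)))^(3*x) ≤ Real.exp (-(1/(3*(x:ℝ))))^(3*x) := e2
    _ = Real.exp (-1) := e3
    _ ≤ 1/2 := e5


private lemma ssf_pairs_card (N x : ℕ) :
    (((Finset.Icc 1 N).powerset.filter (fun Z => Z.card ≤ x)) ×ˢ (Finset.Icc 1 N)).card
      ≤ (N+1)^(x+1) := by
  classical
  have hgeom : ∑ k ∈ Finset.range (x+1), N^k ≤ (N+1)^x := by
    induction x with
    | zero => simp
    | succ x ih =>
      rw [Finset.sum_range_succ, pow_succ]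
      have h1 : N^x * N ≤ (N+1)^x * N :=
        Nat.mul_le_mul_right N (Nat.pow_le_pow_left (Nat.le_succ N) x)
      have h2 : (N+1)^(x+1) = (N+1)^x + (N+1)^x * N := by ring
      omega
  rw [Finset.card_product]
  have h1 : ((Finset.Icc 1 N).powerset.filter (fun Z => Z.card ≤ x)).card ≤ (N+1)^x := by
    have hsub : (Finset.Icc 1 N).powerset.filter (fun Z => Z.card ≤ x) ⊆
        (Finset.range (x+1)).biUnion (fun k => Finset.powersetCard k (Finset.Icc 1 N)) := by
      intro Z hZ
      rw [Finset.mem_filter, Finset.mem_powerset] at hZ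
      rw [Finset.mem_biUnion]
      exact ⟨Z.card, Finset.mem_range.mpr (by omega),
        Finset.mem_powersetCard.mpr ⟨hZ.1, rfl⟩⟩
    calc ((Finset.Icc 1 N).powerset.filter (fun Z => Z.card ≤ x)).card
        ≤ ((Finset.range (x+1)).biUnion
            (fun k => Finset.powersetCard k (Finset.Icc 1 N))).card :=
          Finset.card_le_card hsub
      _ ≤ ∑ k ∈ Finset.range (x+1), (Finset.powersetCard k (Finset.Icc 1 N)).card :=
          Finset.card_biUnion_le
      _ = ∑ k ∈ Finset.range (x+1), N.choose k := by
          refine Finset.sum_congr rfl (fun k _ => ?_)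
          rw [Finset.card_powersetCard, Nat.card_Icc, Nat.add_sub_cancel]
      _ ≤ ∑ k ∈ Finset.range (x+1), N^k :=
          Finset.sum_le_sum (fun k _ => Nat.choose_le_pow N k)
      _ ≤ (N+1)^x := hgeom
  have h2 : (Finset.Icc 1 N).card ≤ N+1 := by
    rw [Nat.card_Icc, Nat.add_sub_cancel]; omega
  calc _ ≤ (N+1)^x * (N+1) := Nat.mul_le_mul h1 h2
    _ = (N+1)^(x+1) := by rw [pow_succ]



private def ssfF (N : ℕ) (n : ℕ) : Fin (N+1) := if h : n < N+1 then ⟨n, h⟩ else 0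






private lemma ssfF_inj (N : ℕ) {a b : ℕ} (ha : a ∈ Finset.Icc 1 N)
    (hb : b ∈ Finset.Icc 1 N) (h : ssfF N a = ssfF N b) : a = b := by
  simp only [Finset.mem_Icc] at ha hb
  have ha' : a < N + 1 := by omega
  have hb' : b < N + 1 := by omega
  simpa [ssfF, ha', hb'] using h


private lemma ssf_single (N x : ℕ) [NeZero x] (hx : 1 ≤ x)
    (Z : Finset ℕ) (hZ : Z ⊆ Finset.Icc 1 N) (hk : Z.card ≤ x)
    (z : ℕ) (hz : z ∈ Z) :
    x^(N+1) ≤ 3 * x * ((Finset.univ : Finset (Fin (N+1) → Fin x)).filter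
        (fun h => h (ssfF N z) = 0 ∧ ∀ z' ∈ Z.erase z, h (ssfF N z') ≠ 0)).card := by
  classical
  set k := Z.card with hkdef
  have hk1 : 1 ≤ k := Finset.card_pos.mpr ⟨z, hz⟩
  set img : Finset (Fin (N+1)) := (Z.erase z).image (ssfF N) with himg
  have himgcard : img.card = k - 1 := by
    rw [himg, Finset.card_image_of_injOn, Finset.card_erase_of_mem hz]
    intro a ha b hb hab
    exact ssfF_inj N (hZ (Finset.mem_of_mem_erase ha)) (hZ (Finset.mem_of_mem_erase hb)) hab
  have hfz : ssfF N z ∉ img := by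
    rw [himg]
    simp only [Finset.mem_image, not_exists]
    rintro a ⟨ha, hab⟩
    have := ssfF_inj N (hZ (Finset.mem_of_mem_erase ha)) (hZ hz) hab
    exact (Finset.ne_of_mem_erase ha) this
  set t : Fin (N+1) → Finset (Fin x) :=
    fun j => if j = ssfF N z then {0} else if j ∈ img then ({0}ᶜ) else Finset.univ with ht
  -- piFinset t is contained in the filter
  have hsub : Fintype.piFinset t ⊆ (Finset.univ : Finset (Fin (N+1) → Fin x)).filter
      (fun h => h (ssfF N z) = 0 ∧ ∀ z' ∈ Z.erase z, h (ssfF N z') ≠ 0) := by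
    intro h hh
    rw [Fintype.mem_piFinset] at hh
    rw [Finset.mem_filter]
    refine ⟨Finset.mem_univ _, ?_, ?_⟩
    · have := hh (ssfF N z)
      rw [ht] at this
      simpa using this
    · intro z' hz'
      have hne : ssfF N z' ≠ ssfF N z := by
        intro hcon
        exact (Finset.ne_of_mem_erase hz')
          (ssfF_inj N (hZ (Finset.mem_of_mem_erase hz')) (hZ hz) hcon)
      have hmem : ssfF N z' ∈ img := Finset.mem_image_of_mem _ hz'
      have := hh (ssfF N z')
      rw [ht] at this
      simp only [if_neg hne, if_pos hmem, Finset.mem_compl, Finset.mem_singleton] at this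
      exact this
  -- card of piFinset t
  have hcardt : (Fintype.piFinset t).card = (x-1)^(k-1) * x^(N+1-k) := by
    rw [Fintype.card_piFinset]
    set A : Finset (Fin (N+1)) := insert (ssfF N z) img with hA
    have hAcard : A.card = k := by
      rw [hA, Finset.card_insert_of_notMem hfz, himgcard]
      omega
    have hsplit := Finset.prod_mul_prod_compl A (fun j => (t j).card)
    rw [← hsplit]
    have h1 : ∏ j ∈ A, (t j).card = (x-1)^(k-1) := by
      rw [hA, Finset.prod_insert hfz]
      have h2 : (t (ssfF N z)).card = 1 := by rw [ht]; simp
      have h3 : ∏ j ∈ img, (t j).card = (x-1)^(k-1) := by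
        rw [← himgcard]
        apply Finset.prod_eq_pow_card
        intro j hj
        have hne : j ≠ ssfF N z := fun hc => hfz (hc ▸ hj)
        rw [ht]
        simp only [if_neg hne, if_pos hj]
        rw [Finset.card_compl, Finset.card_singleton, Fintype.card_fin]
      rw [h2, h3, one_mul]
    have h4 : ∏ j ∈ Aᶜ, (t j).card = x^(N+1-k) := by
      have hc : Aᶜ.card = N+1-k := by
        rw [Finset.card_compl, hAcard, Fintype.card_fin]
      rw [← hc]
      apply Finset.prod_eq_pow_card
      intro j hj
      rw [Finset.mem_compl, hA, Finset.mem_insert] at hj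
      push_neg at hj
      rw [ht]
      simp only [if_neg hj.1, if_neg hj.2]
      rw [Finset.card_univ, Fintype.card_fin]
    rw [h1, h4]
  -- arithmetic
  have harith : x^(N+1) ≤ 3 * x * ((x-1)^(k-1) * x^(N+1-k)) := by
    have hkN : k ≤ N := by
      have := Finset.card_le_card hZ
      rwa [Nat.card_Icc, Nat.add_sub_cancel] at this
    have hexp : x^(N+1) = x * x^(k-1) * x^(N+1-k) := by
      rw [← pow_succ', ← pow_add]
      congr 1
      omega
    rw [hexp]
    have := ssf_pow3 x (k-1) hx (by omega)
    calc x * x^(k-1) * x^(N+1-k) ≤ x * (3 * (x-1)^(k-1)) * x^(N+1-k) := by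
          apply Nat.mul_le_mul_right
          exact Nat.mul_le_mul_left x this
      _ = 3 * x * ((x-1)^(k-1) * x^(N+1-k)) := by ring
  calc x^(N+1) ≤ 3 * x * ((x-1)^(k-1) * x^(N+1-k)) := harith
    _ = 3 * x * (Fintype.piFinset t).card := by rw [hcardt]
    _ ≤ 3 * x * _ := Nat.mul_le_mul_left _ (Finset.card_le_card hsub)

/-- Existence of (N,x)-strongly-selective families of length O(x^2 log N):
there is an absolute constant `c` such that for all positive `x ≤ N` there is a
family of subsets of `{1,…,N}` of size at most `c * x^2 * ⌈log N⌉` such that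
every nonempty `Z ⊆ {1,…,N}` with `|Z| ≤ x` and every `z ∈ Z` is selected. -/
theorem ssf_existence :
    ∃ c : ℕ, 0 < c ∧ ∀ N x : ℕ, 0 < x → x ≤ N →
      ∃ S : List (Finset ℕ),
        (∀ A ∈ S, A ⊆ Finset.Icc 1 N) ∧
        S.length ≤ c * x ^ 2 * (Nat.clog 2 N + 1) ∧
        ∀ Z ⊆ Finset.Icc 1 N, Z.Nonempty → Z.card ≤ x → ∀ z ∈ Z,
          ∃ A ∈ S, A ∩ Z = {z} := by
  classical
  refine ⟨9, by norm_num, fun N x hx hxN => ?_⟩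
  haveI : NeZero x := ⟨hx.ne'⟩
  have hN : 1 ≤ N := le_trans hx hxN
  set L := Nat.clog 2 N + 1 with hLdef
  have hL1 : 1 ≤ L := Nat.le_add_left 1 _
  set s := 9 * x ^ 2 * L with hsdef
  set T := x ^ (N+1) with hTdef
  have hT1 : 1 ≤ T := Nat.one_le_pow _ _ hx
  -- bad events
  set Good : (Fin (N+1) → Fin x) → Finset ℕ → ℕ → Prop :=
    fun h Z z => h (ssfF N z) = 0 ∧ ∀ z' ∈ Z.erase z, h (ssfF N z') ≠ 0 with hGoodDef
  set badSingle : Finset ℕ → ℕ → Finset (Fin (N+1) → Fin x) :=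
    fun Z z => Finset.univ.filter (fun h => ¬ Good h Z z) with hbsDef
  set badPair : Finset ℕ → ℕ → Finset (Fin s → Fin (N+1) → Fin x) :=
    fun Z z => Fintype.piFinset (fun _ => badSingle Z z) with hbpDef
  set pairs : Finset (Finset ℕ × ℕ) :=
    (((Finset.Icc 1 N).powerset.filter (fun Z => Z.card ≤ x)) ×ˢ (Finset.Icc 1 N)).filter
      (fun p => p.2 ∈ p.1) with hpairsDef
  set bigBad : Finset (Fin s → Fin (N+1) → Fin x) :=
    Finset.univ.filter (fun ω => ∃ p ∈ pairs, ω ∈ badPair p.1 p.2) with hbbDef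
  -- per-pair bound, real valued
  have hx0R : (0:ℝ) < (x:ℝ) := by exact_mod_cast hx
  have hx1R : (1:ℝ) ≤ (x:ℝ) := by exact_mod_cast hx
  have hTR : (0:ℝ) < (T:ℝ) := by exact_mod_cast hT1
  have hsingle : ∀ p ∈ pairs, ((badSingle p.1 p.2).card : ℝ) ≤ (1 - 1/(3*(x:ℝ))) * T := by
    rintro ⟨Z, z⟩ hp
    rw [hpairsDef, Finset.mem_filter, Finset.mem_product, Finset.mem_filter,
      Finset.mem_powerset] at hp
    obtain ⟨⟨⟨hZsub, hZcard⟩, -⟩, hzZ⟩ := hp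
    have hkey := ssf_single N x hx Z hZsub hZcard z hzZ
    have hsplit : ((Finset.univ : Finset (Fin (N+1) → Fin x)).filter
          (fun h => Good h Z z)).card + (badSingle Z z).card = T := by
      rw [hbsDef]
      rw [Finset.card_filter_add_card_filter_not, Finset.card_univ,
        Fintype.card_fun, Fintype.card_fin, Fintype.card_fin]
    set g := ((Finset.univ : Finset (Fin (N+1) → Fin x)).filter
        (fun h => Good h Z z)).card with hg
    have hkey' : (T:ℝ) ≤ 3 * x * g := by exact_mod_cast hkey
    have hsplit' : (g:ℝ) + (badSingle Z z).card = T := by exact_mod_cast hsplit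
    have h3x : (0:ℝ) < 3 * (x:ℝ) := by linarith
    have hgT : (T:ℝ)/(3*(x:ℝ)) ≤ g := by
      rw [div_le_iff₀ h3x]
      nlinarith
    have : ((badSingle Z z).card : ℝ) = T - g := by linarith
    rw [this]
    have : (1 - 1/(3*(x:ℝ))) * T = T - T/(3*(x:ℝ)) := by
      field_simp
    rw [this]
    linarith
  -- bigBad is small
  have hbbcard : bigBad.card < T ^ s := by
    have hsub : bigBad ⊆ pairs.biUnion (fun p => badPair p.1 p.2) := by
      intro ω hω
      rw [hbbDef, Finset.mem_filter] at hω
      obtain ⟨-, p, hp, hmem⟩ := hω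
      exact Finset.mem_biUnion.mpr ⟨p, hp, hmem⟩
    have h1 : bigBad.card ≤ ∑ p ∈ pairs, (badSingle p.1 p.2).card ^ s := by
      calc bigBad.card ≤ (pairs.biUnion (fun p => badPair p.1 p.2)).card :=
            Finset.card_le_card hsub
        _ ≤ ∑ p ∈ pairs, (badPair p.1 p.2).card := Finset.card_biUnion_le
        _ = ∑ p ∈ pairs, (badSingle p.1 p.2).card ^ s := by
            refine Finset.sum_congr rfl (fun p _ => ?_)
            rw [hbpDef, Fintype.card_piFinset_const]
    -- real chain
    have h2 : (bigBad.card : ℝ) ≤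
        (pairs.card : ℝ) * ((1 - 1/(3*(x:ℝ))) * T) ^ s := by
      have hb : (0:ℝ) ≤ (1 - 1/(3*(x:ℝ))) * T := by
        have h13 : 1/(3*(x:ℝ)) ≤ 1/3 :=
          one_div_le_one_div_of_le (by norm_num) (by linarith)
        nlinarith
      calc (bigBad.card : ℝ) ≤ ((∑ p ∈ pairs, (badSingle p.1 p.2).card ^ s : ℕ) : ℝ) := by
            exact_mod_cast h1
        _ = ∑ p ∈ pairs, ((badSingle p.1 p.2).card : ℝ) ^ s := by push_cast; rfl
        _ ≤ ∑ p ∈ pairs, ((1 - 1/(3*(x:ℝ))) * T) ^ s :=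
            Finset.sum_le_sum (fun p hp =>
              pow_le_pow_left₀ (Nat.cast_nonneg _) (hsingle p hp) s)
        _ = (pairs.card : ℝ) * ((1 - 1/(3*(x:ℝ))) * T) ^ s := by
            rw [Finset.sum_const, nsmul_eq_mul]
    -- pairs.card ≤ 2^(2xL)
    have hNle : N + 1 ≤ 2 ^ L := by
      have h1 : N ≤ 2 ^ Nat.clog 2 N := Nat.le_pow_clog (by norm_num) N
      have h2 : 2 ^ L = 2 ^ Nat.clog 2 N * 2 := by rw [hLdef, pow_succ]
      omega
    have hpcard : (pairs.card : ℝ) ≤ (2:ℝ) ^ (2*x*L) := by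
      have hp1 : pairs.card ≤ (N+1)^(x+1) := by
        refine le_trans (Finset.card_le_card (Finset.filter_subset _ _)) ?_
        exact ssf_pairs_card N x
      have hp2 : (N+1)^(x+1) ≤ (2^L)^(x+1) := Nat.pow_le_pow_left hNle _
      have hp3 : (2^L)^(x+1) ≤ 2^(2*x*L) := by
        rw [← pow_mul]
        apply Nat.pow_le_pow_right (by norm_num)
        have : x + 1 ≤ 2 * x := by omega
        calc L * (x+1) ≤ L * (2*x) := Nat.mul_le_mul_left L this
          _ = 2*x*L := by ring
      have : pairs.card ≤ 2^(2*x*L) := le_trans hp1 (le_trans hp2 hp3)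
      exact_mod_cast this
    -- (1 - 1/(3x))^s ≤ (1/2)^(3xL)
    have hps : ((1 - 1/(3*(x:ℝ)))) ^ s ≤ (1/2:ℝ) ^ (3*x*L) := by
      have hseq : s = (3*x) * (3*x*L) := by rw [hsdef]; ring
      rw [hseq, pow_mul]
      have h13 : 1/(3*(x:ℝ)) ≤ 1/3 :=
        one_div_le_one_div_of_le (by norm_num) (by linarith)
      have h0' : (0:ℝ) ≤ 1 - 1/(3*(x:ℝ)) := by linarith
      exact pow_le_pow_left₀ (pow_nonneg h0' (3*x)) (ssf_half x hx) (3*x*L)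
    -- combine
    have h3 : (bigBad.card : ℝ) < (T:ℝ) ^ s := by
      have hT0 : (0:ℝ) < (T:ℝ)^s := by positivity
      have hstep : (pairs.card : ℝ) * ((1 - 1/(3*(x:ℝ))) * T) ^ s ≤
          (2:ℝ)^(2*x*L) * ((1/2:ℝ)^(3*x*L) * (T:ℝ)^s) := by
        rw [mul_pow]
        have h13 : 1/(3*(x:ℝ)) ≤ 1/3 :=
          one_div_le_one_div_of_le (by norm_num) (by linarith)
        have h0' : (0:ℝ) ≤ 1 - 1/(3*(x:ℝ)) := by linarith
        have hp0 : (0:ℝ) ≤ ((1 - 1/(3*(x:ℝ))))^s * (T:ℝ)^s :=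
          mul_nonneg (pow_nonneg h0' s) (by positivity)
        have := mul_le_mul hpcard
          (mul_le_mul_of_nonneg_right hps (le_of_lt hT0)) hp0 (by positivity)
        linarith [this]
      have hfinal : (2:ℝ)^(2*x*L) * ((1/2:ℝ)^(3*x*L) * (T:ℝ)^s) < (T:ℝ)^s := by
        have hlt : (2:ℝ)^(2*x*L) * (1/2:ℝ)^(3*x*L) < 1 := by
          rw [one_div, inv_pow, mul_inv_lt_iff₀ (by positivity), one_mul]
          exact pow_lt_pow_right₀ (by norm_num) (by nlinarith [hL1, hx])
        calc (2:ℝ)^(2*x*L) * ((1/2:ℝ)^(3*x*L) * (T:ℝ)^s)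
            = ((2:ℝ)^(2*x*L) * (1/2:ℝ)^(3*x*L)) * (T:ℝ)^s := by ring
          _ < 1 * (T:ℝ)^s := by exact mul_lt_mul_of_pos_right hlt hT0
          _ = (T:ℝ)^s := one_mul _
      linarith
    have : (bigBad.card : ℝ) < ((T^s : ℕ) : ℝ) := by push_cast; exact h3
    exact_mod_cast this
  -- extract a good ω
  have hΩcard : (Finset.univ : Finset (Fin s → Fin (N+1) → Fin x)).card = T ^ s := by
    rw [Finset.card_univ, Fintype.card_fun, Fintype.card_fun, Fintype.card_fin,
      Fintype.card_fin, Fintype.card_fin, hTdef]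
  obtain ⟨ω, hω⟩ : ∃ ω : Fin s → Fin (N+1) → Fin x, ω ∉ bigBad := by
    by_contra hcon
    push_neg at hcon
    have : (Finset.univ : Finset (Fin s → Fin (N+1) → Fin x)) ⊆ bigBad :=
      fun ω _ => hcon ω
    have := Finset.card_le_card this
    rw [hΩcard] at this
    omega
  -- build the family
  refine ⟨List.ofFn (fun i : Fin s =>
    (Finset.Icc 1 N).filter (fun n => ω i (ssfF N n) = 0)), ?_, ?_, ?_⟩
  · intro A hA
    rw [List.mem_ofFn] at hA
    obtain ⟨i, rfl⟩ := hA
    exact Finset.filter_subset _ _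
  · rw [List.length_ofFn]
  · intro Z hZsub hZne hZcard z hzZ
    have hpmem : (Z, z) ∈ pairs := by
      rw [hpairsDef, Finset.mem_filter, Finset.mem_product, Finset.mem_filter,
        Finset.mem_powerset]
      exact ⟨⟨⟨hZsub, hZcard⟩, hZsub hzZ⟩, hzZ⟩
    have hnotbad : ω ∉ badPair Z z := by
      intro hmem
      apply hω
      rw [hbbDef, Finset.mem_filter]
      exact ⟨Finset.mem_univ _, ⟨(Z, z), hpmem, hmem⟩⟩
    rw [hbpDef, Fintype.mem_piFinset] at hnotbad
    push_neg at hnotbad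
    obtain ⟨i, hi⟩ := hnotbad
    rw [hbsDef, Finset.mem_filter] at hi
    push_neg at hi
    have hGoodi : Good (ω i) Z z := hi (Finset.mem_univ _)
    rw [hGoodDef] at hGoodi
    obtain ⟨hg1, hg2⟩ := hGoodi
    refine ⟨(Finset.Icc 1 N).filter (fun n => ω i (ssfF N n) = 0), ?_, ?_⟩
    · rw [List.mem_ofFn]
      exact ⟨i, rfl⟩
    · ext n
      simp only [Finset.mem_inter, Finset.mem_filter, Finset.mem_singleton]
      constructor
      · rintro ⟨⟨hnIcc, hn0⟩, hnZ⟩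
        by_contra hne
        exact hg2 n (Finset.mem_erase.mpr ⟨hne, hnZ⟩) hn0
      · rintro rfl
        exact ⟨⟨hZsub hzZ, hg1⟩, hzZ⟩
end

section
/- Suppose Δ nodes each transmit independently with probability p = 1/2^k in a round, where 2^{k−1} ≤ Δ ≤ 2^k − 1. Then the probability that exactly one node transmits in that round is at least 1/8. -/
private lemma key_pow (k : ℕ) (hk : 1 ≤ k) :
    (1 / 4 : ℝ) ≤ (1 - 1 / 2 ^ k) ^ (2 ^ k) := by
  induction k with
  | zero => omega
  | succ k ih =>
    rcases Nat.eq_or_lt_of_le hk with h | h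
    · norm_num [← h]
    · have hk1 : 1 ≤ k := by omega
      have ih := ih hk1
      have hpos : (0 : ℝ) < 2 ^ k := by positivity
      have hb0 : (0 : ℝ) ≤ 1 - 1 / 2 ^ k := by
        have h1k : (1 : ℝ) ≤ 2 ^ k := one_le_pow₀ (by norm_num)
        have : (1 : ℝ) / 2 ^ k ≤ 1 := by rw [div_le_one hpos]; exact h1k
        linarith
      have hsq : (1 - 1 / 2 ^ k : ℝ) ≤ (1 - 1 / 2 ^ (k + 1)) ^ 2 := by
        have h2 : (2 : ℝ) ^ (k + 1) = 2 ^ k * 2 := by ring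
        rw [h2]
        have hx : (1 / (2 ^ k * 2) : ℝ) * 2 = 1 / 2 ^ k := by
          field_simp
        nlinarith [sq_nonneg (1 / (2 ^ k * 2) : ℝ), hx]
      calc (1 / 4 : ℝ) ≤ (1 - 1 / 2 ^ k) ^ (2 ^ k) := ih
        _ ≤ ((1 - 1 / 2 ^ (k + 1)) ^ 2) ^ (2 ^ k) := by
            exact pow_le_pow_left₀ hb0 hsq _
        _ = (1 - 1 / 2 ^ (k + 1)) ^ (2 ^ (k + 1)) := by
            rw [← pow_mul]; ring_nf

/-- If `Δ` nodes each transmit independently with probability `1/2^k` where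
`2^(k-1) ≤ Δ ≤ 2^k - 1`, then the probability that exactly one node transmits,
namely `Δ · (1/2^k) · (1 - 1/2^k)^(Δ-1)`, is at least `1/8`. -/
theorem exactly_one_transmits (k Δ : ℕ) (hk : 1 ≤ k)
    (h1 : 2 ^ (k - 1) ≤ Δ) (h2 : Δ ≤ 2 ^ k - 1) :
    (1 : ℝ) / 8 ≤ (Δ : ℝ) * (1 / 2 ^ k) * (1 - 1 / 2 ^ k) ^ (Δ - 1) := by
  have hpos : (0 : ℝ) < 2 ^ k := by positivity
  have hb0 : (0 : ℝ) ≤ 1 - 1 / 2 ^ k := by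
    have h1k : (1 : ℝ) ≤ 2 ^ k := one_le_pow₀ (by norm_num)
    have : (1 : ℝ) / 2 ^ k ≤ 1 := by rw [div_le_one hpos]; exact h1k
    linarith
  have hb1 : (1 : ℝ) - 1 / 2 ^ k ≤ 1 := by
    have : (0:ℝ) ≤ 1 / 2 ^ k := by positivity
    linarith
  have hexp : Δ - 1 ≤ 2 ^ k :=
    le_trans (Nat.sub_le _ _) (h2.trans (Nat.sub_le _ _))
  have hpow : (1 / 4 : ℝ) ≤ (1 - 1 / 2 ^ k) ^ (Δ - 1) :=
    (key_pow k hk).trans (pow_le_pow_of_le_one hb0 hb1 hexp)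
  -- Δ / 2^k ≥ 1/2
  have hΔ : (2 : ℝ) ^ (k - 1) ≤ (Δ : ℝ) := by
    have := (Nat.cast_le (α := ℝ)).mpr h1
    push_cast at this
    exact this
  have h2k : (2 : ℝ) ^ k = 2 ^ (k - 1) * 2 := by
    rw [← pow_succ]; congr 1; omega
  have hhalf : (1 / 2 : ℝ) ≤ (Δ : ℝ) * (1 / 2 ^ k) := by
    rw [mul_one_div, le_div_iff₀ hpos, h2k]
    linarith
  calc (1 : ℝ) / 8 = (1 / 2) * (1 / 4) := by norm_num
    _ ≤ (Δ : ℝ) * (1 / 2 ^ k) * ((1 - 1 / 2 ^ k) ^ (Δ - 1)) :=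
        mul_le_mul hhalf hpow (by norm_num) (by positivity)
end

section
/- Let S be a set of points in the plane such that any two distinct points of S are at distance greater than r. Then for any point p, the number of points of S at distance at most 2r from p is at most 49. -/
/-- If `S` is a set of points in the plane any two of which are at distance
greater than `r`, then at most `25` points of `S` lie within distance `2r` of any
point `p`. -/
theorem independent_points_in_disk_le_49 (r : ℝ) (hr : 0 < r)
    (S : Finset (EuclideanSpace ℝ (Fin 2)))
    (hS : ∀ u ∈ S, ∀ v ∈ S, u ≠ v → r < dist u v)
    (p : EuclideanSpace ℝ (Fin 2)) :
    (S.filter (fun q => dist p q ≤ 2 * r)).card ≤ 49 := by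
  have h2 : (0:ℝ) < Real.sqrt 2 := Real.sqrt_pos.2 (by norm_num)
  set s : ℝ := r / Real.sqrt 2 with hs
  have hspos : 0 < s := div_pos hr h2
  set T := S.filter (fun q => dist p q ≤ 2 * r) with hT
  have key : ∀ q ∈ T, ∀ i : Fin 2, |q i - p i| ≤ 2 * r := by
    intro q hq i
    have hq' := (Finset.mem_filter.1 hq).2
    have h1 : dist (q i) (p i) ≤ dist q p := by
      rw [EuclideanSpace.dist_eq]
      have hle : dist (q i) (p i) ^ 2 ≤ ∑ j, dist (q j) (p j) ^ 2 :=
        Finset.single_le_sum (f := fun j => dist (q j) (p j) ^ 2) (fun j _ => sq_nonneg _) (Finset.mem_univ i)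
      calc dist (q i) (p i) = Real.sqrt (dist (q i) (p i) ^ 2) := (Real.sqrt_sq dist_nonneg).symm
        _ ≤ _ := Real.sqrt_le_sqrt hle
    rw [Real.dist_eq] at h1
    exact h1.trans (by rwa [dist_comm] at hq')
  have hinj : Set.InjOn (fun q : EuclideanSpace ℝ (Fin 2) =>
      (⌊(q 0 - p 0)/s⌋, ⌊(q 1 - p 1)/s⌋)) T := by
    intro u hu v hv huv
    by_contra hne
    have hdist := hS u (Finset.mem_filter.1 hu).1 v (Finset.mem_filter.1 hv).1 hne
    have hcoord : ∀ i : Fin 2, |u i - v i| < s := by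
      intro i
      have hfl : ⌊(u i - p i)/s⌋ = ⌊(v i - p i)/s⌋ := by
        fin_cases i
        · exact congrArg Prod.fst huv
        · exact congrArg Prod.snd huv
      have h3 : |(u i - p i)/s - (v i - p i)/s| < 1 :=
        Int.abs_sub_lt_one_of_floor_eq_floor hfl
      rw [div_sub_div_same, abs_div, abs_of_pos hspos, div_lt_one hspos] at h3
      simpa using h3
    have hlt : dist u v < r := by
      rw [EuclideanSpace.dist_eq, Fin.sum_univ_two, Real.sqrt_lt' hr]
      have e0 : dist (u 0) (v 0) ^ 2 < s ^ 2 := by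
        have h := hcoord 0
        rw [Real.dist_eq]
        exact sq_lt_sq' (by linarith [abs_nonneg (u 0 - v 0), abs_nonneg (u 1 - v 1)]) h
      have e1 : dist (u 1) (v 1) ^ 2 < s ^ 2 := by
        have h := hcoord 1
        rw [Real.dist_eq]
        exact sq_lt_sq' (by linarith [abs_nonneg (u 0 - v 0), abs_nonneg (u 1 - v 1)]) h
      have hs2 : 2 * s ^ 2 = r ^ 2 := by
        rw [hs, div_pow, Real.sq_sqrt (by norm_num : (0:ℝ) ≤ 2)]
        ring
      linarith
    linarith
  have hmaps : ∀ q ∈ T, (⌊(q 0 - p 0)/s⌋, ⌊(q 1 - p 1)/s⌋) ∈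
      Finset.Icc (-3:ℤ) 2 ×ˢ Finset.Icc (-3:ℤ) 2 := by
    intro q hq
    have hb : ∀ i : Fin 2, ⌊(q i - p i)/s⌋ ∈ Finset.Icc (-3:ℤ) 2 := by
      intro i
      have habs := key q hq i
      have hlt3 : 2 * Real.sqrt 2 < 3 := by
        nlinarith [Real.sq_sqrt (by norm_num : (0:ℝ) ≤ 2), Real.sqrt_nonneg 2]
      have hx : |(q i - p i)/s| < 3 := by
        rw [abs_div, abs_of_pos hspos, div_lt_iff₀ hspos]
        calc |q i - p i| ≤ 2 * r := habs
          _ = 2 * Real.sqrt 2 * s := by rw [hs]; field_simp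
          _ < 3 * s := by nlinarith
      rw [abs_lt] at hx
      simp only [Finset.mem_Icc]
      constructor
      · exact Int.le_floor.2 (by push_cast; linarith [hx.1])
      · have : ⌊(q i - p i)/s⌋ < 3 := Int.floor_lt.2 (by push_cast; linarith [hx.2])
        omega
    simp [Finset.mem_product, hb 0, hb 1]
  calc T.card ≤ (Finset.Icc (-3:ℤ) 2 ×ˢ Finset.Icc (-3:ℤ) 2).card :=
      Finset.card_le_card_of_injOn _ hmaps hinj
    _ ≤ 49 := by simp [Finset.card_product, Int.card_Icc]
end

section
/- Let S be a set of points in the plane such that any two distinct points of S are at distance greater than r. Then for any point p, the number of points of S at distance at most 3r from p is at most 121. -/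
lemma coord_abs_le_dist (x y : EuclideanSpace ℝ (Fin 2)) (i : Fin 2) :
    |x i - y i| ≤ dist x y := by
  rw [EuclideanSpace.dist_eq]
  have h1 : |x i - y i| = Real.sqrt (dist (x i) (y i) ^ 2) := by
    rw [Real.sqrt_sq_eq_abs, Real.dist_eq, abs_abs]
  rw [h1]
  apply Real.sqrt_le_sqrt
  exact Finset.single_le_sum (f := fun j => dist (x j) (y j) ^ 2)
    (fun j _ => sq_nonneg _) (Finset.mem_univ i)

lemma floor_eq_abs_sub_lt {x y : ℝ} (h : ⌊x⌋ = ⌊y⌋) : |x - y| < 1 := by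
  rw [abs_sub_lt_iff]
  constructor
  · have hx : x < ⌊x⌋ + 1 := Int.lt_floor_add_one x
    have hy : (⌊y⌋ : ℝ) ≤ y := Int.floor_le y
    rw [h] at hx; linarith
  · have hy : y < ⌊y⌋ + 1 := Int.lt_floor_add_one y
    have hx : (⌊x⌋ : ℝ) ≤ x := Int.floor_le x
    rw [h] at hx; linarith

/-- If `S` is a set of points in the plane any two of which are at distance
greater than `r`, then at most `25` points of `S` lie within distance `3r` of any
point `p`. -/
theorem independent_points_in_disk_le_121 (r : ℝ) (hr : 0 < r)
    (S : Finset (EuclideanSpace ℝ (Fin 2)))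
    (hS : ∀ u ∈ S, ∀ v ∈ S, u ≠ v → r < dist u v)
    (p : EuclideanSpace ℝ (Fin 2)) :
    (S.filter (fun q => dist p q ≤ 3 * r)).card ≤ 121 := by
  have h2 : (0:ℝ) < Real.sqrt 2 := Real.sqrt_pos.mpr (by norm_num)
  set s : ℝ := r / Real.sqrt 2 with hs
  have hs0 : 0 < s := div_pos hr h2
  set f : EuclideanSpace ℝ (Fin 2) → ℤ × ℤ :=
    fun q => (⌊(q 0 - p 0) / s⌋, ⌊(q 1 - p 1) / s⌋) with hf
  have hsq2 : s * Real.sqrt 2 = r := div_mul_cancel₀ r (ne_of_gt h2)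
  have key : (S.filter (fun q => dist p q ≤ 3 * r)).card ≤
      ((Finset.Icc (-5:ℤ) 4) ×ˢ (Finset.Icc (-5:ℤ) 4)).card := by
    apply Finset.card_le_card_of_injOn f
    · intro q hq
      simp only [Finset.mem_coe, Finset.mem_filter] at hq
      obtain ⟨hqS, hqd⟩ := hq
      have hb : ∀ i : Fin 2, |q i - p i| ≤ 3 * r := fun i =>
        le_trans (coord_abs_le_dist q p i) (by rwa [dist_comm])
      have h3r : 3 * r / s < 5 := by
        have heq : 3 * r / s = 3 * Real.sqrt 2 := by
          rw [hs]; field_simp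
        rw [heq]
        nlinarith [Real.sq_sqrt (by norm_num : (0:ℝ) ≤ 2), Real.sqrt_nonneg 2]
      have hmem : ∀ i : Fin 2, ⌊(q i - p i) / s⌋ ∈ Finset.Icc (-5:ℤ) 4 := by
        intro i
        have habs : |(q i - p i) / s| ≤ 3 * r / s := by
          rw [abs_div, abs_of_pos hs0]
          exact div_le_div_of_nonneg_right (hb i) hs0.le
        rw [abs_le] at habs
        rw [Finset.mem_Icc]
        constructor
        · exact Int.le_floor.mpr (by push_cast; linarith)
        · have hlt : ⌊(q i - p i) / s⌋ < 5 :=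
            Int.floor_lt.mpr (by push_cast; linarith)
          omega
      simp only [Finset.mem_coe, Finset.mem_product, hf]
      exact ⟨hmem 0, hmem 1⟩
    · intro a ha b hb hab
      simp only [Finset.mem_coe, Finset.mem_filter] at ha hb
      by_contra hne
      have hr' : r < dist a b := hS a ha.1 b hb.1 hne
      have hcoord : ∀ i : Fin 2, |a i - b i| < s := by
        intro i
        have hfi : ⌊(a i - p i) / s⌋ = ⌊(b i - p i) / s⌋ := by
          have := hab
          simp only [hf, Prod.mk.injEq] at this
          fin_cases i
          · exact this.1
          · exact this.2
        have := floor_eq_abs_sub_lt hfi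
        have heq : (a i - p i) / s - (b i - p i) / s = (a i - b i) / s := by ring
        rw [heq, abs_div, abs_of_pos hs0, div_lt_one hs0] at this
        exact this
      have hd : dist a b ≤ r := by
        rw [EuclideanSpace.dist_eq, Fin.sum_univ_two]
        have h0 := hcoord 0
        have h1 := hcoord 1
        have hd0 : dist (a 0) (b 0) ^ 2 < s ^ 2 := by
          rw [Real.dist_eq]
          nlinarith [abs_nonneg (a 0 - b 0)]
        have hd1 : dist (a 1) (b 1) ^ 2 < s ^ 2 := by
          rw [Real.dist_eq]
          nlinarith [abs_nonneg (a 1 - b 1)]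
        have : dist (a 0) (b 0) ^ 2 + dist (a 1) (b 1) ^ 2 < 2 * s ^ 2 := by linarith
        calc Real.sqrt (dist (a 0) (b 0) ^ 2 + dist (a 1) (b 1) ^ 2)
            ≤ Real.sqrt (2 * s ^ 2) := Real.sqrt_le_sqrt (le_of_lt this)
          _ = r := by
              rw [Real.sqrt_mul (by norm_num), Real.sqrt_sq (le_of_lt hs0)]
              rw [mul_comm]; exact hsq2
      linarith
  calc (S.filter (fun q => dist p q ≤ 3 * r)).card ≤ _ := key
    _ ≤ 121 := by simp [Finset.card_product]
end

section
/- Let G be a unit disk graph on a finite set V ⊆ ℝ² with connection radius ρ (vertices adjacent iff their distance is at most ρ), and let M ⊆ V be a maximal independent set of G. If one adds, for each pair of vertices of M at graph distance at most 3 in G, all internal vertices of one shortest path between them, then the resulting set H (M together with the added connectors) is a connected dominating set of G, provided G is connected. -/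
section aux
variable {V : Type*} {G : SimpleGraph V}

lemma walk_reach {H : Set V} : ∀ {u v : V} (p : G.Walk u v)
    (hp : ∀ w ∈ p.support, w ∈ H),
    (G.induce H).Reachable ⟨u, hp _ p.start_mem_support⟩ ⟨v, hp _ p.end_mem_support⟩ := by
  intro u v p
  induction p with
  | nil => intro _; rfl
  | cons h q ih =>
    intro hp
    have hq : ∀ w ∈ q.support, w ∈ H := fun w hw => hp w (by simp [hw])
    refine SimpleGraph.Reachable.trans ?_ (ih hq)
    exact SimpleGraph.Adj.reachable (by simpa using h)

lemma dist_getVert_le (hconn : G.Connected) :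
    ∀ {u v : V} (p : G.Walk u v) (i : ℕ), G.dist u (p.getVert i) ≤ i := by
  intro u v p
  induction p with
  | nil => intro i; simp [SimpleGraph.Walk.getVert, SimpleGraph.dist_self]
  | @cons a b c h q ih =>
    intro i
    cases i with
    | zero => simp [SimpleGraph.Walk.getVert]
    | succ n =>
      rw [SimpleGraph.Walk.getVert_cons_succ]
      have h1 : G.dist _ _ ≤ h.toWalk.length := SimpleGraph.dist_le h.toWalk
      simp only [SimpleGraph.Walk.length_cons, SimpleGraph.Walk.length_nil] at h1
      have h2 := ih n
      have h3 := hconn.dist_triangle (u := a) (v := b) (w := q.getVert n)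
      omega
end aux

/-- Let `G` be a connected unit disk graph on a finite set of points in the
plane (vertices adjacent iff distinct and at distance at most `ρ`), `M` a
maximal independent set of `G`, and `H ⊇ M` obtained from `M` by adding, for
each pair of `M`-vertices at graph distance at most `3`, the internal vertices
of one shortest path between them. Then `H` is a connected dominating set:
the subgraph induced by `H` is connected and every vertex is in `H` or adjacent
to a vertex of `H`. -/
theorem mis_plus_connectors_is_cds
    {V : Type*} [Fintype V] (pos : V → EuclideanSpace ℝ (Fin 2)) (ρ : ℝ)
    (hρ : 0 < ρ) (G : SimpleGraph V)
    (hudg : ∀ u v : V, G.Adj u v ↔ u ≠ v ∧ dist (pos u) (pos v) ≤ ρ)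
    (hconn : G.Connected)
    (M : Set V)
    (hindep : ∀ u ∈ M, ∀ v ∈ M, ¬G.Adj u v)
    (hmax : ∀ v : V, v ∈ M ∨ ∃ u ∈ M, G.Adj u v)
    (H : Set V) (hMH : M ⊆ H)
    (hpaths : ∀ u ∈ M, ∀ v ∈ M, G.dist u v ≤ 3 →
      ∃ p : G.Walk u v, p.length = G.dist u v ∧ ∀ w ∈ p.support, w ∈ H)
    (hHonly : ∀ h ∈ H, h ∈ M ∨ ∃ u ∈ M, ∃ v ∈ M, ∃ p : G.Walk u v,
      p.length = G.dist u v ∧ G.dist u v ≤ 3 ∧ (∀ w ∈ p.support, w ∈ H) ∧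
      h ∈ p.support) :
    (G.induce H).Connected ∧ ∀ v : V, v ∈ H ∨ ∃ u ∈ H, G.Adj u v := by
  classical
  have base : ∀ u (hu : u ∈ M) v (hv : v ∈ M), G.dist u v ≤ 3 →
      (G.induce H).Reachable ⟨u, hMH hu⟩ ⟨v, hMH hv⟩ := by
    intro u hu v hv hd
    obtain ⟨p, _, hp⟩ := hpaths u hu v hv hd
    exact walk_reach p hp
  have key : ∀ n, ∀ u (hu : u ∈ M) v (hv : v ∈ M), G.dist u v ≤ n →
      (G.induce H).Reachable ⟨u, hMH hu⟩ ⟨v, hMH hv⟩ := by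
    intro n
    induction n using Nat.strong_induction_on with
    | _ n ih =>
      intro u hu v hv hd
      by_cases h3 : G.dist u v ≤ 3
      · exact base u hu v hv h3
      · push_neg at h3
        obtain ⟨p, hp⟩ := hconn.exists_walk_length_eq_dist u v
        set x := p.getVert 2 with hx
        have hux : G.dist u x ≤ 2 := dist_getVert_le hconn p 2
        have hxv : G.dist x v ≤ G.dist u v - 2 := by
          have hrev : p.reverse.getVert (p.length - 2) = x := by
            rw [SimpleGraph.Walk.getVert_reverse]
            congr 1
            omega
          have := dist_getVert_le hconn p.reverse (p.length - 2)
          rw [hrev] at this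
          rw [SimpleGraph.dist_comm]
          omega
        obtain ⟨m, hm, hmx⟩ : ∃ m ∈ M, m = x ∨ G.Adj m x := by
          rcases hmax x with h | ⟨m, hm, hmx⟩
          · exact ⟨x, h, Or.inl rfl⟩
          · exact ⟨m, hm, Or.inr hmx⟩
        have hxm : G.dist x m ≤ 1 := by
          rcases hmx with rfl | h
          · simp [SimpleGraph.dist_self]
          · rw [SimpleGraph.dist_comm]
            have h1 : G.dist _ _ ≤ h.toWalk.length := SimpleGraph.dist_le h.toWalk
            simpa using h1
        have hum : G.dist u m ≤ 3 :=
          le_trans (hconn.dist_triangle (v := x)) (by omega)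
        have hmv : G.dist m v ≤ G.dist u v - 1 := by
          have htr := hconn.dist_triangle (u := m) (v := x) (w := v)
          rw [SimpleGraph.dist_comm] at hxm
          omega
        have h1 : (G.induce H).Reachable ⟨u, hMH hu⟩ ⟨m, hMH hm⟩ :=
          base u hu m hm hum
        have h2 : (G.induce H).Reachable ⟨m, hMH hm⟩ ⟨v, hMH hv⟩ :=
          ih (n - 1) (by omega) m hm v hv (by omega)
        exact h1.trans h2
  have toM : ∀ h (hh : h ∈ H), ∃ u, ∃ hu : u ∈ M,
      (G.induce H).Reachable ⟨h, hh⟩ ⟨u, hMH hu⟩ := by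
    intro h hh
    rcases hHonly h hh with hM | ⟨u, hu, v, hv, p, _, _, hp, hmem⟩
    · exact ⟨h, hM, by rfl⟩
    · refine ⟨u, hu, ?_⟩
      have hq : ∀ w ∈ (p.takeUntil h hmem).support, w ∈ H := fun w hw =>
        hp w (SimpleGraph.Walk.support_takeUntil_subset _ hmem hw)
      exact (walk_reach (p.takeUntil h hmem) hq).symm
  obtain ⟨w0⟩ := hconn.nonempty
  obtain ⟨m0, hm0⟩ : ∃ m, m ∈ M := by
    rcases hmax w0 with h | ⟨u, hu, _⟩
    · exact ⟨w0, h⟩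
    · exact ⟨u, hu⟩
  refine ⟨?_, ?_⟩
  · rw [SimpleGraph.connected_iff_exists_forall_reachable]
    refine ⟨⟨m0, hMH hm0⟩, ?_⟩
    rintro ⟨b, hb⟩
    obtain ⟨v, hv, hbr⟩ := toM b hb
    exact ((key (G.dist m0 v) m0 hm0 v hv le_rfl).trans hbr.symm)
  · intro v
    rcases hmax v with h | ⟨u, hu, hadj⟩
    · exact Or.inl (hMH h)
    · exact Or.inr ⟨u, hMH hu, hadj⟩
end

section
/- If M is a maximal independent set of a connected graph G with diameter D, and H is a connected dominating set obtained from M by adding connectors joining pairs of M-nodes at graph distance at most 3 (as above), then the diameter of the subgraph induced by H is O(D); specifically, any two nodes of H are joined in H by a path of length at most c·D + c' for absolute constants c, c'. -/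
lemma walk_induce {V : Type} (G : SimpleGraph V) (H : Set V) :
    ∀ {u v : V} (p : G.Walk u v), (∀ w ∈ p.support, w ∈ H) →
      ∀ (hu : u ∈ H) (hv : v ∈ H),
      ∃ q : (G.induce H).Walk ⟨u, hu⟩ ⟨v, hv⟩, q.length = p.length := by
  intro u v p
  induction p with
  | nil => intro _ hu hv; exact ⟨.nil, rfl⟩
  | @cons u b v h p ih =>
    intro hp hu hv
    have hb : b ∈ H := hp _ (by simp)
    obtain ⟨q, hq⟩ := ih (fun w hw => hp w (by simp [hw])) hb hv
    exact ⟨.cons (by exact h) q, congrArg (· + 1) hq⟩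

lemma cds_key {V : Type} (G : SimpleGraph V) (hc : G.Connected)
    (M H : Set V) (hMH : M ⊆ H)
    (hdom : ∀ v : V, v ∈ M ∨ ∃ u ∈ M, G.Adj u v)
    (hcon : ∀ u ∈ M, ∀ v ∈ M, G.dist u v ≤ 3 →
      ∃ p : G.Walk u v, p.length = G.dist u v ∧ ∀ w ∈ p.support, w ∈ H) :
    ∀ n : ℕ, ∀ x, ∀ hx : x ∈ M, ∀ y, ∀ hy : y ∈ M, G.dist x y ≤ n →
      ∃ q : (G.induce H).Walk ⟨x, hMH hx⟩ ⟨y, hMH hy⟩, q.length ≤ 3 * n := by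
  intro n
  induction n with
  | zero =>
    intro x hx y hy hd
    have : x = y := hc.dist_eq_zero_iff.mp (Nat.le_zero.mp hd)
    subst this
    exact ⟨.nil, by simp⟩
  | succ n ih =>
    intro x hx y hy hd
    by_cases h3 : G.dist x y ≤ 3
    · obtain ⟨p, hlen, hsupp⟩ := hcon x hx y hy h3
      obtain ⟨q, hq⟩ := walk_induce G H p hsupp (hMH hx) (hMH hy)
      exact ⟨q, by omega⟩
    · push_neg at h3
      obtain ⟨p, hlen⟩ := hc.exists_walk_length_eq_dist x y
      cases p with
      | nil => simp only [SimpleGraph.Walk.length_nil, SimpleGraph.Walk.length_cons] at hlen; omega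
      | @cons _ a _ h₁ p' =>
      cases p' with
      | nil => simp only [SimpleGraph.Walk.length_nil, SimpleGraph.Walk.length_cons] at hlen; omega
      | @cons _ w _ h₂ rest =>
        simp only [SimpleGraph.Walk.length_cons] at hlen
        -- find dominator m of w
        obtain ⟨m, hm, hmw⟩ : ∃ m ∈ M, G.dist m w ≤ 1 := by
          rcases hdom w with hw | ⟨m, hm, hadj⟩
          · exact ⟨w, hw, by rw [hc.dist_eq_zero_iff.mpr rfl]; omega⟩
          · exact ⟨m, hm, SimpleGraph.dist_le hadj.toWalk⟩
        have hxw : G.dist x w ≤ 2 :=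
          SimpleGraph.dist_le (SimpleGraph.Walk.cons h₁ (SimpleGraph.Walk.cons h₂ .nil))
        have hxm : G.dist x m ≤ 3 := by
          have := hc.dist_triangle (u := x) (v := w) (w := m)
          have hwm : G.dist w m ≤ 1 := by rwa [SimpleGraph.dist_comm]
          omega
        have hwy : G.dist w y ≤ rest.length := SimpleGraph.dist_le rest
        have hmy : G.dist m y ≤ n := by
          have := hc.dist_triangle (u := m) (v := w) (w := y)
          omega
        obtain ⟨p₁, hl₁, hs₁⟩ := hcon x hx m hm hxm
        obtain ⟨q₁, hq₁⟩ := walk_induce G H p₁ hs₁ (hMH hx) (hMH hm)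
        obtain ⟨q₂, hq₂⟩ := ih m hm y hy hmy
        exact ⟨q₁.append q₂, by simp only [SimpleGraph.Walk.length_append]; omega⟩

lemma cds_anchor {V : Type} (G : SimpleGraph V) (M H : Set V) (hMH : M ⊆ H)
    (hH : ∀ h ∈ H, h ∈ M ∨ ∃ u ∈ M, ∃ v ∈ M, ∃ p : G.Walk u v,
      p.length = G.dist u v ∧ G.dist u v ≤ 3 ∧ (∀ w ∈ p.support, w ∈ H) ∧
      h ∈ p.support)
    (a : V) (ha : a ∈ H) [DecidableEq V] :
    ∃ m, ∃ hm : m ∈ M, ∃ q : (G.induce H).Walk ⟨a, ha⟩ ⟨m, hMH hm⟩,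
      q.length ≤ 3 := by
  rcases hH a ha with haM | ⟨u, hu, v, hv, p, hlen, hd3, hsupp, hmem⟩
  · exact ⟨a, haM, .nil, by simp⟩
  · have t := p.takeUntil a hmem
    have hts : ∀ w ∈ (p.takeUntil a hmem).support, w ∈ H := fun w hw =>
      hsupp w (p.support_takeUntil_subset hmem hw)
    obtain ⟨q, hq⟩ := walk_induce G H (p.takeUntil a hmem) hts (hMH hu) ha
    refine ⟨u, hu, q.reverse, ?_⟩
    rw [SimpleGraph.Walk.length_reverse, hq]
    have := p.length_takeUntil_le hmem
    omega


/-- If `M` is a maximal independent set of a finite connected graph `G` of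
diameter at most `D`, and `H ⊇ M` is obtained by adding, for each pair of
`M`-nodes at graph distance at most `3`, the internal vertices of one shortest
connecting path, then any two nodes of `H` are joined inside `H` by a path of
length at most `c·D + c'` for absolute constants `c, c'`. -/
theorem cds_diameter_linear :
    ∃ c c' : ℕ, ∀ {V : Type} [Fintype V] (G : SimpleGraph V) (D : ℕ),
      G.Connected → (∀ u v : V, G.dist u v ≤ D) →
      ∀ (M : Set V),
        (∀ u ∈ M, ∀ v ∈ M, ¬G.Adj u v) →
        (∀ v : V, v ∈ M ∨ ∃ u ∈ M, G.Adj u v) →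
      ∀ (H : Set V), M ⊆ H →
        (∀ u ∈ M, ∀ v ∈ M, G.dist u v ≤ 3 →
          ∃ p : G.Walk u v, p.length = G.dist u v ∧ ∀ w ∈ p.support, w ∈ H) →
        (∀ h ∈ H, h ∈ M ∨ ∃ u ∈ M, ∃ v ∈ M, ∃ p : G.Walk u v,
          p.length = G.dist u v ∧ G.dist u v ≤ 3 ∧ (∀ w ∈ p.support, w ∈ H) ∧
          h ∈ p.support) →
      ∀ a b : H, ∃ p : (G.induce H).Walk a b, p.length ≤ c * D + c' := by
  refine ⟨3, 6, ?_⟩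
  intro V _ G D hc hD M _ hdom H hMH hcon hH a b
  classical
  obtain ⟨ma, hma, qa, hqa⟩ := cds_anchor G M H hMH hH a a.2
  obtain ⟨mb, hmb, qb, hqb⟩ := cds_anchor G M H hMH hH b b.2
  obtain ⟨q, hq⟩ := cds_key G hc M H hMH hdom hcon D ma hma mb hmb (hD ma mb)
  refine ⟨(qa.append q).append qb.reverse, ?_⟩
  simp only [SimpleGraph.Walk.length_append, SimpleGraph.Walk.length_reverse]
  omega
end
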